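/- Let V be a real vector space, Q a symmetric bilinear form on V, and e₁, …, eₙ elements of V. Set e = e₁ + ⋯ + eₙ. Then for any real numbers x₁, …, xₙ, setting x = x₁e₁ + ⋯ + xₙeₙ, one has Q(x, x) = Σᵢ xᵢ² Q(eᵢ, e) − Σ_{i<j} (xᵢ − xⱼ)² Q(eᵢ, eⱼ). -/

import Mathlib

open Finset

/-- The quadratic-form identity
`Q(x,x) = ∑ᵢ xᵢ² Q(eᵢ, e) − ∑_{i<j} (xᵢ − xⱼ)² Q(eᵢ, eⱼ)` with `e = e₁ + ⋯ + eₙ`. -/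
theorem stmt2 {V : Type*} [AddCommGroup V] [Module ℝ V]
    (Q : V →ₗ[ℝ] V →ₗ[ℝ] ℝ) (hQsymm : ∀ x y, Q x y = Q y x)
    {n : ℕ} (e : Fin n → V) (x : Fin n → ℝ) :
    Q (∑ i, x i • e i) (∑ i, x i • e i) =
      (∑ i, (x i) ^ 2 * Q (e i) (∑ j, e j)) -
        ∑ i, ∑ j, (if i < j then (x i - x j) ^ 2 * Q (e i) (e j) else 0) := by
  set a : Fin n → Fin n → ℝ := fun i j => Q (e i) (e j) with ha
  have hsym : ∀ i j, a i j = a j i := fun i j => hQsymm (e i) (e j)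
  have expand : Q (∑ i, x i • e i) (∑ i, x i • e i)
      = ∑ i, ∑ j, x i * x j * a i j := by
    simp only [map_sum, map_smul, LinearMap.coe_sum, Finset.sum_apply,
      LinearMap.smul_apply, smul_eq_mul, Finset.mul_sum, Finset.sum_mul]
    rw [Finset.sum_comm]
    exact Finset.sum_congr rfl fun i _ => Finset.sum_congr rfl fun j _ => by ring
  have h1 : ∑ i, (x i) ^ 2 * Q (e i) (∑ j, e j)
      = ∑ i, ∑ j, (x i) ^ 2 * a i j := by
    simp [map_sum, Finset.mul_sum]
    rfl
  -- symmetric auxiliary double sum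
  have hc : ∀ i j, (x i - x j) ^ 2 * a i j = (x j - x i) ^ 2 * a j i := by
    intro i j; rw [hsym]; ring_nf
  have hswap : ∀ (f : Fin n → Fin n → ℝ),
      (∑ i, ∑ j, f i j) = ∑ i, ∑ j, f j i := fun f => Finset.sum_comm
  have h2 : (∑ i, ∑ j, (if i < j then (x i - x j) ^ 2 * a i j else 0)) * 2
      = ∑ i, ∑ j, (x i - x j) ^ 2 * a i j := by
    have split : ∀ i j : Fin n, (x i - x j) ^ 2 * a i j =
        (if i < j then (x i - x j) ^ 2 * a i j else 0)
        + (if j < i then (x i - x j) ^ 2 * a i j else 0) := by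
      intro i j
      rcases lt_trichotomy i j with h | h | h
      · simp [h, not_lt_of_gt h]
      · simp [h]
      · simp [h, not_lt_of_gt h]
    calc (∑ i, ∑ j, (if i < j then (x i - x j) ^ 2 * a i j else 0)) * 2
        = (∑ i, ∑ j, (if i < j then (x i - x j) ^ 2 * a i j else 0))
          + ∑ i, ∑ j, (if i < j then (x j - x i) ^ 2 * a j i else 0) := by
          rw [mul_two]
          congr 1
          refine Finset.sum_congr rfl fun i _ => Finset.sum_congr rfl fun j _ => ?_
          rw [hc]
      _ = (∑ i, ∑ j, (if i < j then (x i - x j) ^ 2 * a i j else 0))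
          + ∑ i, ∑ j, (if j < i then (x i - x j) ^ 2 * a i j else 0) := by
          congr 1
          rw [hswap (fun i j => if j < i then (x i - x j) ^ 2 * a i j else 0)]
      _ = ∑ i, ∑ j, (x i - x j) ^ 2 * a i j := by
          rw [← Finset.sum_add_distrib]
          refine Finset.sum_congr rfl fun i _ => ?_
          rw [← Finset.sum_add_distrib]
          exact Finset.sum_congr rfl fun j _ => (split i j).symm
  have h3 : ∑ i, ∑ j, (x j) ^ 2 * a i j = ∑ i, ∑ j, (x i) ^ 2 * a i j := by
    rw [hswap (fun i j => (x j) ^ 2 * a i j)]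
    exact Finset.sum_congr rfl fun i _ => Finset.sum_congr rfl fun j _ => by rw [hsym]
  have h4 : ∑ i, ∑ j, (x i - x j) ^ 2 * a i j
      = (∑ i, ∑ j, (x i) ^ 2 * a i j) + (∑ i, ∑ j, (x j) ^ 2 * a i j)
        - 2 * ∑ i, ∑ j, x i * x j * a i j := by
    have : ∑ i, ∑ j, (x i - x j) ^ 2 * a i j
        = ∑ i, ∑ j, ((x i) ^ 2 * a i j + (x j) ^ 2 * a i j - 2 * (x i * x j * a i j)) :=
      Finset.sum_congr rfl fun i _ => Finset.sum_congr rfl fun j _ => by ring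
    rw [this]
    simp [Finset.sum_add_distrib, Finset.sum_sub_distrib, Finset.mul_sum]
  rw [expand, h1]
  rw [h3] at h4
  linarith
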